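/- Let B*(s) = −2^{s+1}·Γ(s+2)/((1 − 2^{s+1})(1 − 2^{s+2})). For every real z > 0, the function s ↦ B*(s)·z^{−s} has a double pole at s = −2 with residue lim_{s→−2} (d/ds)[(s+2)²·B*(s)·z^{−s}] = −z²·log₂ z + z²·(3 ln 2 − 2γ)/(2 ln 2), where γ is Euler's constant. -/

import Mathlib

open Filter
open scoped Topology

noncomputable section

/-- The Mellin transform of the shifted poissonized mean,
`B*(s) = −2^{s+1} Γ(s+2) / ((1 − 2^{s+1})(1 − 2^{s+2}))`. -/
def Bstar (s : ℂ) : ℂ :=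
  -((2 : ℂ) ^ (s + 1)) * Complex.Gamma (s + 2) /
    ((1 - (2 : ℂ) ^ (s + 1)) * (1 - (2 : ℂ) ^ (s + 2)))

namespace ResidueAux

open Complex

/-- `log 2` as a complex number. -/
def cc : ℂ := (Real.log 2 : ℂ)

lemma hlog2_pos : (0:ℝ) < Real.log 2 := Real.log_pos one_lt_two

lemma hlog2_lt : Real.log 2 < 1 := by
  have := Real.log_two_lt_d9
  linarith

lemma hcc_ne : cc ≠ 0 := by
  simp only [cc, ne_eq, ofReal_eq_zero]
  exact hlog2_pos.ne'

lemma abs_cc : ‖cc‖ = Real.log 2 := by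
  rw [cc, Complex.norm_real, Real.norm_eq_abs, abs_of_pos hlog2_pos]

lemma exp_ne_one_of_re_ne {ζ : ℂ} (h : ζ.re ≠ 0) : Complex.exp ζ ≠ 1 := by
  intro he
  have h1 : ‖Complex.exp ζ‖ = 1 := by rw [he]; simp
  rw [Complex.norm_exp] at h1
  rw [show (1:ℝ) = Real.exp 0 by simp] at h1
  exact h (Real.exp_eq_exp.mp h1)

lemma exp_ne_one_small {u : ℂ} (hu : u ≠ 0) (hu1 : ‖u‖ < 1) :
    Complex.exp (cc * u) ≠ 1 := by
  intro he
  obtain ⟨n, hn⟩ := Complex.exp_eq_one_iff.mp he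
  rcases eq_or_ne n 0 with rfl | hn0
  · simp only [Int.cast_zero, zero_mul, mul_eq_zero] at hn
    rcases hn with h | h
    · exact hcc_ne h
    · exact hu h
  · have h1 : ‖cc * u‖ < 1 := by
      rw [norm_mul, abs_cc]
      have h0 := norm_nonneg u
      nlinarith [hlog2_lt, hlog2_pos]
    have h2 : (1:ℝ) ≤ ‖(n:ℂ) * (2 * Real.pi * I)‖ := by
      rw [norm_mul]
      have ha : ‖(n:ℂ)‖ = |(n:ℝ)| := by
        rw [← Complex.ofReal_intCast, Complex.norm_real, Real.norm_eq_abs]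
      have hb : (1:ℝ) ≤ |(n:ℝ)| := by
        rw [← Int.cast_abs]
        exact_mod_cast Int.one_le_abs hn0
      have hc : ‖2 * Real.pi * I‖ = 2 * Real.pi := by
        simp [abs_of_pos Real.pi_pos, Real.pi_pos.le]
      rw [ha, hc]
      nlinarith [Real.pi_gt_three]
    rw [hn] at h1; linarith

/-- The analytic extension of `u / (1 - 2^u)` at `0`. -/
def Ffun : ℂ → ℂ :=
  Function.update (fun u : ℂ => u / (1 - Complex.exp (cc * u))) 0 (-cc⁻¹)

lemma Ffun_zero : Ffun 0 = -cc⁻¹ := Function.update_self _ _ _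

lemma Ffun_of_ne {u : ℂ} (hu : u ≠ 0) :
    Ffun u = u / (1 - Complex.exp (cc * u)) := Function.update_of_ne hu _ _

lemma qHasDeriv (u : ℂ) : HasDerivAt (fun v : ℂ => 1 - Complex.exp (cc * v))
    (-(cc * Complex.exp (cc * u))) u := by
  have h1 : HasDerivAt (fun v : ℂ => Complex.exp (cc * v)) (cc * Complex.exp (cc * u)) u := by
    have := ((hasDerivAt_id u).const_mul cc).cexp
    simpa [mul_comm] using this
  simpa using h1.const_sub 1

lemma denom_ne {u : ℂ} (hu : u ≠ 0) (hu1 : ‖u‖ < 1) :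
    1 - Complex.exp (cc * u) ≠ 0 := by
  intro h
  exact exp_ne_one_small hu hu1 (sub_eq_zero.mp h).symm

lemma Ffun_diff {u : ℂ} (hu : u ≠ 0) (hu1 : ‖u‖ < 1) :
    DifferentiableAt ℂ Ffun u := by
  have heq : Ffun =ᶠ[𝓝 u] fun v => v / (1 - Complex.exp (cc * v)) := by
    filter_upwards [isOpen_ne.mem_nhds hu] with v hv
    exact Ffun_of_ne hv
  have hd : DifferentiableAt ℂ (fun v => v / (1 - Complex.exp (cc * v))) u :=
    DifferentiableAt.div differentiableAt_id (qHasDeriv u).differentiableAt (denom_ne hu hu1)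
  exact hd.congr_of_eventuallyEq heq

lemma Ffun_tendsto : Tendsto Ffun (𝓝[≠] (0:ℂ)) (𝓝 (-cc⁻¹)) := by
  have hq : Tendsto (slope (fun v : ℂ => 1 - Complex.exp (cc * v)) 0) (𝓝[≠] 0) (𝓝 (-cc)) := by
    have := (qHasDeriv 0)
    rw [hasDerivAt_iff_tendsto_slope] at this
    simpa using this
  have hinv : Tendsto (fun u => (slope (fun v : ℂ => 1 - Complex.exp (cc * v)) 0 u)⁻¹)
      (𝓝[≠] 0) (𝓝 (-cc)⁻¹) := hq.inv₀ (neg_ne_zero.mpr hcc_ne)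
  have : ∀ᶠ u in 𝓝[≠] (0:ℂ), (slope (fun v : ℂ => 1 - Complex.exp (cc * v)) 0 u)⁻¹ = Ffun u := by
    filter_upwards [self_mem_nhdsWithin] with u hu
    rw [slope_def_field, Ffun_of_ne hu]
    simp only [mul_zero, Complex.exp_zero, sub_self, sub_zero]
    rw [inv_div]
  rw [show -cc⁻¹ = (-cc)⁻¹ by ring]
  exact hinv.congr' this

lemma Ffun_analytic : AnalyticAt ℂ Ffun 0 := by
  apply Complex.analyticAt_of_differentiable_on_punctured_nhds_of_continuousAt
  · filter_upwards [self_mem_nhdsWithin,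
      eventually_nhdsWithin_of_eventually_nhds (Metric.eventually_nhds_iff.mpr
        ⟨1, one_pos, fun {v} hv => hv⟩ : ∀ᶠ v in 𝓝 (0:ℂ), dist v 0 < 1)] with u hu hu1
    exact Ffun_diff hu (by simpa [Complex.dist_eq] using hu1)
  · rw [← continuousWithinAt_compl_self]
    unfold ContinuousWithinAt
    rw [Ffun_zero]
    exact Ffun_tendsto

lemma Ffun_mul_q : (fun u => Ffun u * (1 - Complex.exp (cc * u))) =ᶠ[𝓝 (0:ℂ)] id := by
  filter_upwards [Metric.ball_mem_nhds (0:ℂ) one_pos] with u hu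
  rcases eq_or_ne u 0 with rfl | hne
  · simp [Ffun_zero]
  · rw [Ffun_of_ne hne, div_mul_cancel₀]
    · rfl
    · exact denom_ne hne (by simpa [Complex.dist_eq] using hu)

lemma expcc_hasDeriv (u : ℂ) : HasDerivAt (fun v : ℂ => Complex.exp (cc * v))
    (cc * Complex.exp (cc * u)) u := by
  have := ((hasDerivAt_id u).const_mul cc).cexp
  simpa [mul_comm] using this

lemma deriv_Ffun : deriv Ffun 0 = 1 / 2 := by
  have hF := Ffun_analytic
  have hFd : ∀ᶠ u in 𝓝 (0:ℂ), DifferentiableAt ℂ Ffun u :=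
    hF.eventually_analyticAt.mono fun u hu => hu.differentiableAt
  have h2 := Ffun_mul_q.deriv
  have h3 : (fun u => deriv Ffun u * (1 - Complex.exp (cc * u)) +
      Ffun u * (-(cc * Complex.exp (cc * u)))) =ᶠ[𝓝 (0:ℂ)] fun _ => (1:ℂ) := by
    filter_upwards [hFd, h2] with u hu h2u
    have hprod : deriv (fun u => Ffun u * (1 - Complex.exp (cc * u))) u = _ :=
      (hu.hasDerivAt.mul (qHasDeriv u)).deriv
    rw [hprod] at h2u
    rw [h2u, deriv_id]
  obtain ⟨s, hs, hsub⟩ := eventually_iff_exists_mem.mp hF.eventually_analyticAt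
  have hOn : AnalyticOnNhd ℂ Ffun s := fun x hx => hsub x hx
  have hd2 : AnalyticAt ℂ (deriv Ffun) 0 := hOn.deriv 0 (mem_of_mem_nhds hs)
  have hA : HasDerivAt (fun u => deriv Ffun u * (1 - Complex.exp (cc * u)))
      (deriv (deriv Ffun) 0 * (1 - Complex.exp (cc * 0)) +
        deriv Ffun 0 * (-(cc * Complex.exp (cc * 0)))) 0 :=
    (hd2.differentiableAt.hasDerivAt).mul (qHasDeriv 0)
  have hB : HasDerivAt (fun u => Ffun u * (-(cc * Complex.exp (cc * u))))
      (deriv Ffun 0 * (-(cc * Complex.exp (cc * 0))) +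
        Ffun 0 * (-(cc * (cc * Complex.exp (cc * 0))))) 0 := by
    have hq2 : HasDerivAt (fun u : ℂ => -(cc * Complex.exp (cc * u)))
        (-(cc * (cc * Complex.exp (cc * 0)))) 0 := ((expcc_hasDeriv 0).const_mul cc).neg
    exact (hF.differentiableAt.hasDerivAt).mul hq2
  have hD : deriv (fun u => deriv Ffun u * (1 - Complex.exp (cc * u)) +
      Ffun u * (-(cc * Complex.exp (cc * u)))) 0 = _ := (hA.add hB).deriv
  have h0 : deriv (fun u => deriv Ffun u * (1 - Complex.exp (cc * u)) +
      Ffun u * (-(cc * Complex.exp (cc * u)))) 0 = 0 := by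
    rw [h3.deriv_eq, deriv_const]
  rw [hD] at h0
  simp only [mul_zero, Complex.exp_zero, sub_self, mul_one, Ffun_zero] at h0
  have h1 : deriv Ffun 0 * cc = (1/2 : ℂ) * cc := by
    linear_combination -h0/2 + (cc/2) * (mul_inv_cancel₀ hcc_ne)
  exact mul_right_cancel₀ hcc_ne h1

/-- Analytic extension of `(w+2)² B*(w) e^{-wL}` near `-2`. -/
def Gfun (L : ℂ) : ℂ → ℂ := fun w =>
  -Complex.exp (cc * (w + 1)) * Complex.Gamma (w + 3) * Complex.exp (-w * L) /
    (1 - Complex.exp (cc * (w + 1))) * Ffun (w + 2)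

lemma two_cpow (s : ℂ) : (2 : ℂ) ^ s = Complex.exp (cc * s) := by
  rw [Complex.cpow_def_of_ne_zero two_ne_zero]
  congr 1
  rw [cc, show ((2:ℂ)) = ((2:ℝ):ℂ) by norm_num, Complex.ofReal_log (by norm_num : (0:ℝ) ≤ 2)]

lemma exp_neg_cc : Complex.exp (-cc) = 1 / 2 := by
  rw [cc, ← Complex.ofReal_neg, ← Complex.ofReal_exp]
  rw [Real.exp_neg, Real.exp_log (by norm_num : (0:ℝ) < 2)]
  norm_num

lemma den1_ne {w : ℂ} (h : ‖w + 2‖ < 1/2) :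
    1 - Complex.exp (cc * (w + 1)) ≠ 0 := by
  intro hcon
  refine exp_ne_one_of_re_ne (ζ := cc * (w + 1)) ?_ (sub_eq_zero.mp hcon).symm
  have h1 : |(w + 2).re| < 1/2 := lt_of_le_of_lt (Complex.abs_re_le_norm _) h
  have h2 : (w + 1).re = (w + 2).re - 1 := by simp [Complex.add_re]; ring
  have h3 : (cc * (w + 1)).re = Real.log 2 * (w + 1).re := by
    rw [cc, Complex.re_ofReal_mul]
  rw [h3]
  have := abs_lt.mp h1
  nlinarith [hlog2_pos]

lemma gamma_arg_ne {w : ℂ} (h : ‖w + 2‖ < 1/2) (m : ℕ) : w + 3 ≠ -m := by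
  intro hcon
  have h1 : |(w + 2).re| < 1/2 := lt_of_le_of_lt (Complex.abs_re_le_norm _) h
  have h2 : (w + 3).re = (w + 2).re + 1 := by simp [Complex.add_re]; ring
  have h3 : (w + 3).re = -(m:ℝ) := by rw [hcon]; simp
  have := abs_lt.mp h1
  have hm : (0:ℝ) ≤ (m:ℝ) := Nat.cast_nonneg m
  linarith [h2 ▸ h3]

/-- Equality of the original function and its analytic extension on a punctured ball. -/
lemma h_eq_G {L : ℂ} {w : ℂ} (hw : w ≠ -2) (h : ‖w + 2‖ < 1/2) :
    (w + 2) ^ 2 * Bstar w * Complex.exp (-w * L) = Gfun L w := by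
  have hw2 : w + 2 ≠ 0 := by
    intro hcon; apply hw; linear_combination hcon
  have hD1 : 1 - Complex.exp (cc * (w + 1)) ≠ 0 := den1_ne h
  have hD2 : 1 - Complex.exp (cc * (w + 2)) ≠ 0 :=
    denom_ne hw2 (by linarith)
  have hΓ : Complex.Gamma (w + 3) = (w + 2) * Complex.Gamma (w + 2) := by
    rw [show w + 3 = (w + 2) + 1 by ring, Complex.Gamma_add_one _ hw2]
  rw [Gfun, Bstar, Ffun_of_ne hw2, hΓ, two_cpow, two_cpow]
  field_simp

lemma hasDerivAt_Gfun (L : ℂ) :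
    HasDerivAt (Gfun L)
      (Complex.exp (2 * L) * (3 / 2 - (Real.eulerMascheroniConstant : ℂ) / cc - L / cc)) (-2) := by
  have habs : ‖(-2:ℂ) + 2‖ < 1/2 := by norm_num
  have hlin : HasDerivAt (fun w : ℂ => cc * (w + 1)) cc (-2) := by
    simpa using ((hasDerivAt_id (-2:ℂ)).add_const 1).const_mul cc
  have hE : HasDerivAt (fun w : ℂ => Complex.exp (cc * (w + 1)))
      (Complex.exp (cc * ((-2) + 1)) * cc) (-2) := hlin.cexp
  have hval : cc * ((-2:ℂ) + 1) = -cc := by ring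
  have hE2 : Complex.exp (cc * ((-2:ℂ) + 1)) = 1/2 := by rw [hval, exp_neg_cc]
  have hΓ1 : HasDerivAt Complex.Gamma (-(Real.eulerMascheroniConstant : ℂ)) ((-2:ℂ) + 3) := by
    rw [show ((-2:ℂ) + 3) = 1 by ring]
    exact Complex.hasDerivAt_Gamma_one
  have hΓ : HasDerivAt (fun w : ℂ => Complex.Gamma (w + 3))
      (-(Real.eulerMascheroniConstant : ℂ) * 1) (-2) :=
    hΓ1.comp (-2) ((hasDerivAt_id _).add_const 3)
  have hZ : HasDerivAt (fun w : ℂ => Complex.exp (-w * L))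
      (Complex.exp (-(-2) * L) * (-1 * L)) (-2) := ((hasDerivAt_id (-2:ℂ)).neg.mul_const L).cexp
  have hN := (hE.neg.mul hΓ).mul hZ
  have hden : HasDerivAt (fun w : ℂ => 1 - Complex.exp (cc * (w + 1)))
      (-(Complex.exp (cc * ((-2) + 1)) * cc)) (-2) := hE.const_sub 1
  have hdval : 1 - Complex.exp (cc * ((-2:ℂ) + 1)) ≠ 0 := den1_ne habs
  have hQ := hN.div hden hdval
  have hF0 : HasDerivAt Ffun (deriv Ffun 0) ((-2:ℂ) + 2) := by
    rw [show ((-2:ℂ) + 2) = 0 by ring]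
    exact Ffun_analytic.differentiableAt.hasDerivAt
  have hFc : HasDerivAt (fun w : ℂ => Ffun (w + 2)) (deriv Ffun 0 * 1) (-2) :=
    hF0.comp (-2) ((hasDerivAt_id _).add_const 2)
  have hG := hQ.mul hFc
  refine hG.congr_deriv ?_
  simp only [Pi.mul_apply, Pi.neg_apply, Pi.div_apply]
  symm
  rw [hE2, deriv_Ffun]
  rw [show ((-2:ℂ) + 3) = 1 by norm_num, Complex.Gamma_one, show ((-2:ℂ) + 2) = 0 by norm_num,
    Ffun_zero]
  rw [show (- -(2:ℂ) * L) = 2 * L by ring]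
  have h2 : (1:ℂ) - 1/2 = 1/2 := by norm_num
  rw [h2, show (2:ℂ) * L = L * 2 by ring]
  field_simp
  linear_combination (-4 : ℂ) * (mul_inv_cancel₀ hcc_ne)

lemma diff_Gfun (L : ℂ) {ε : ℝ}
    (hεF : ∀ u : ℂ, dist u 0 < ε → AnalyticAt ℂ Ffun u) :
    ∀ w ∈ Metric.ball (-2:ℂ) (min ε (1/2)), DifferentiableAt ℂ (Gfun L) w := by
  intro w hw
  have hwd : dist w (-2) < min ε (1/2) := Metric.mem_ball.mp hw
  have habs : ‖w + 2‖ < min ε (1/2) := by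
    simpa [Complex.dist_eq, sub_neg_eq_add] using hwd
  have h12 : ‖w + 2‖ < 1/2 := lt_of_lt_of_le habs (min_le_right _ _)
  have hFd : DifferentiableAt ℂ Ffun (w + 2) := by
    refine (hεF _ ?_).differentiableAt
    simpa [Complex.dist_eq] using lt_of_lt_of_le habs (min_le_left _ _)
  have hE : DifferentiableAt ℂ (fun v : ℂ => Complex.exp (cc * (v + 1))) w :=
    ((differentiableAt_id.add_const 1).const_mul cc).cexp
  have hΓ : DifferentiableAt ℂ (fun v : ℂ => Complex.Gamma (v + 3)) w :=
    (Complex.differentiableAt_Gamma _ (gamma_arg_ne h12)).comp w (differentiableAt_id.add_const 3)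
  have hZ : DifferentiableAt ℂ (fun v : ℂ => Complex.exp (-v * L)) w :=
    (differentiableAt_id.neg.mul_const L).cexp
  have hquot : DifferentiableAt ℂ
      (fun v : ℂ => -Complex.exp (cc * (v + 1)) * Complex.Gamma (v + 3) * Complex.exp (-v * L) /
        (1 - Complex.exp (cc * (v + 1)))) w :=
    ((hE.neg.mul hΓ).mul hZ).div (hE.const_sub 1) (den1_ne h12)
  exact hquot.mul (hFd.comp w (differentiableAt_id.add_const 2))

end ResidueAux

open ResidueAux

/-- For `z > 0`, the function `s ↦ B*(s) z^{−s}` has a double pole at `s = −2` whose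
residue, `lim_{s→−2} (d/ds)[(s+2)² B*(s) z^{−s}]`, equals
`−z² log₂ z + z² (3 ln 2 − 2γ)/(2 ln 2)`. Here `z^{−s} = e^{−s ln z}`. -/
theorem residue_Bstar_double_pole (z : ℝ) (hz : 0 < z) :
    Tendsto
      (fun s : ℂ =>
        deriv (fun w : ℂ => (w + 2) ^ 2 * Bstar w * Complex.exp (-w * Real.log z)) s)
      (𝓝[≠] (-2))
      (𝓝 (((-(z ^ 2) * Real.logb 2 z +
          z ^ 2 * (3 * Real.log 2 - 2 * Real.eulerMascheroniConstant) /
            (2 * Real.log 2) : ℝ) : ℂ))) := by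
  set L : ℂ := (Real.log z : ℂ) with hL
  obtain ⟨ε, hε, hεF⟩ := Metric.eventually_nhds_iff.mp Ffun_analytic.eventually_analyticAt
  have hεF' : ∀ u : ℂ, dist u 0 < ε → AnalyticAt ℂ Ffun u := fun u hu => hεF hu
  set ρ := min ε (1/2) with hρdef
  have hρ : 0 < ρ := lt_min hε (by norm_num)
  have hdiff := diff_Gfun L hεF'
  have hGanal : AnalyticAt ℂ (Gfun L) (-2) := by
    refine DifferentiableOn.analyticAt (s := Metric.ball (-2:ℂ) ρ)
      (fun x hx => (hdiff x hx).differentiableWithinAt) (Metric.ball_mem_nhds _ hρ)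
  obtain ⟨s, hs, hsub⟩ := eventually_iff_exists_mem.mp hGanal.eventually_analyticAt
  have hOn : AnalyticOnNhd ℂ (Gfun L) s := fun x hx => hsub x hx
  have hderivCont : ContinuousAt (deriv (Gfun L)) (-2) :=
    (hOn.deriv (-2) (mem_of_mem_nhds hs)).continuousAt
  set S := Metric.ball (-2:ℂ) ρ \ {(-2:ℂ)} with hSdef
  have hSopen : IsOpen S := Metric.isOpen_ball.sdiff isClosed_singleton
  have hSmem : S ∈ 𝓝[≠] (-2:ℂ) := diff_mem_nhdsWithin_compl (Metric.ball_mem_nhds _ hρ) _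
  have heq : ∀ w ∈ S, ((w + 2) ^ 2 * Bstar w * Complex.exp (-w * L)) = Gfun L w := by
    intro w hw
    refine h_eq_G hw.2 ?_
    have : dist w (-2) < ρ := Metric.mem_ball.mp hw.1
    have habs : ‖w + 2‖ < ρ := by
      simpa [Complex.dist_eq, sub_neg_eq_add] using this
    exact lt_of_lt_of_le habs (min_le_right _ _)
  have hderiv_eq : ∀ᶠ x in 𝓝[≠] (-2:ℂ),
      deriv (Gfun L) x =
        deriv (fun w : ℂ => (w + 2) ^ 2 * Bstar w * Complex.exp (-w * L)) x := by
    filter_upwards [hSmem] with x hx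
    refine (Filter.EventuallyEq.deriv_eq ?_).symm
    filter_upwards [hSopen.mem_nhds hx] with y hy
    exact heq y hy
  have htend : Tendsto (deriv (Gfun L)) (𝓝[≠] (-2:ℂ)) (𝓝 (deriv (Gfun L) (-2))) :=
    hderivCont.tendsto.mono_left nhdsWithin_le_nhds
  have hval : deriv (Gfun L) (-2) =
      (((-(z ^ 2) * Real.logb 2 z +
          z ^ 2 * (3 * Real.log 2 - 2 * Real.eulerMascheroniConstant) /
            (2 * Real.log 2) : ℝ) : ℂ)) := by
    rw [(hasDerivAt_Gfun L).deriv]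
    have hzexp : Complex.exp (2 * L) = ((z ^ 2 : ℝ) : ℂ) := by
      rw [hL, show (2:ℂ) * ((Real.log z : ℝ) : ℂ) = ((2 * Real.log z : ℝ) : ℂ) by push_cast; ring,
        ← Complex.ofReal_exp]
      norm_cast
      rw [show 2 * Real.log z = Real.log (z ^ 2) by rw [Real.log_pow]; push_cast; ring,
        Real.exp_log (pow_pos hz 2)]
    rw [hzexp, hL]
    have hne : ((Real.log 2 : ℝ) : ℂ) ≠ 0 := Complex.ofReal_ne_zero.mpr hlog2_pos.ne'
    rw [show cc = ((Real.log 2 : ℝ) : ℂ) from rfl]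
    have hreal : -(z ^ 2) * Real.logb 2 z +
        z ^ 2 * (3 * Real.log 2 - 2 * Real.eulerMascheroniConstant) / (2 * Real.log 2) =
        z ^ 2 * (3 / 2 - Real.eulerMascheroniConstant / Real.log 2 - Real.log z / Real.log 2) := by
      rw [Real.logb]
      field_simp
      ring
    rw [hreal]
    push_cast
    ring
  rw [← hval]
  exact htend.congr' hderiv_eq
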